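/- Let (X,d) be a metric space, let f be a compatible unbounded modulus function, let (A_k) be a sequence in CL(X) and A ∈ CL(X). Then (A_k) is Wijsman f-strong Cesàro convergent to A if and only if (A_k) is Wijsman strong Cesàro convergent to A. -/
import Mathlib


open Filter Metric Set

/-- `f : ℝ → ℝ` is an (unbounded) modulus function (considered on `[0,∞)`):
`f x = 0 ↔ x = 0`, subadditive, increasing, continuous from the right at `0`,
and unbounded. -/
def IsModulus (f : ℝ → ℝ) : Prop :=
  (∀ x ∈ Set.Ici (0:ℝ), 0 ≤ f x) ∧
  (∀ x ∈ Set.Ici (0:ℝ), (f x = 0 ↔ x = 0)) ∧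
  (∀ x ∈ Set.Ici (0:ℝ), ∀ y ∈ Set.Ici (0:ℝ), f (x + y) ≤ f x + f y) ∧
  MonotoneOn f (Set.Ici (0:ℝ)) ∧
  ContinuousWithinAt f (Set.Ici (0:ℝ)) 0 ∧
  (∀ M : ℝ, ∃ x ∈ Set.Ici (0:ℝ), M < f x)

/-- `φ(ε) = limsup_n f(nε)/f(n)`. -/
noncomputable def modPhi (f : ℝ → ℝ) (ε : ℝ) : ℝ :=
  Filter.limsup (fun n : ℕ => f ((n : ℝ) * ε) / f (n : ℝ)) Filter.atTop

/-- A modulus function is compatible if `φ(ε) → 0` as `ε → 0⁺`. -/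
def Compatible (f : ℝ → ℝ) : Prop :=
  Filter.Tendsto (modPhi f) (nhdsWithin 0 (Set.Ioi 0)) (nhds 0)

/-- Wijsman statistical convergence of a sequence of subsets of a metric space. -/
def WijsmanStatConv {X : Type*} [MetricSpace X] (A : ℕ → Set X) (B : Set X) : Prop :=
  ∀ x : X, ∀ ε > (0:ℝ),
    Filter.Tendsto (fun n : ℕ =>
      (((Finset.range n).filter
        (fun j => ε < |infDist x (A j) - infDist x B|)).card : ℝ) / (n : ℝ))
      Filter.atTop (nhds 0)

/-- Wijsman `f`-statistical convergence of a sequence of subsets of a metric space. -/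
def WijsmanFStatConv {X : Type*} [MetricSpace X] (f : ℝ → ℝ) (A : ℕ → Set X)
    (B : Set X) : Prop :=
  ∀ x : X, ∀ ε > (0:ℝ),
    Filter.Tendsto (fun n : ℕ =>
      f ((((Finset.range n).filter
        (fun j => ε < |infDist x (A j) - infDist x B|)).card : ℝ)) / f (n : ℝ))
      Filter.atTop (nhds 0)

/-- A real sequence is `f`-strong Cesàro convergent to `L`. -/
def FStrongCesaro (f : ℝ → ℝ) (x : ℕ → ℝ) (L : ℝ) : Prop :=
  Filter.Tendsto (fun n : ℕ =>
    f (∑ j ∈ Finset.range n, |x j - L|) / f (n : ℝ)) Filter.atTop (nhds 0)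

/-- Wijsman `f`-strong Cesàro convergence. -/
def WijsmanFStrongCesaro {X : Type*} [MetricSpace X] (f : ℝ → ℝ) (A : ℕ → Set X)
    (B : Set X) : Prop :=
  ∀ x : X, FStrongCesaro f (fun j => infDist x (A j)) (infDist x B)

/-- Wijsman strong Cesàro convergence (the case `f = id`). -/
def WijsmanStrongCesaro {X : Type*} [MetricSpace X] (A : ℕ → Set X) (B : Set X) : Prop :=
  ∀ x : X,
    Filter.Tendsto (fun n : ℕ =>
      (∑ j ∈ Finset.range n, |infDist x (A j) - infDist x B|) / (n : ℝ))
      Filter.atTop (nhds 0)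

/-- A real sequence is uniformly integrable. -/
def UnifIntegrable (x : ℕ → ℝ) : Prop :=
  Filter.Tendsto (fun c : ℝ =>
    ⨆ n : ℕ, (∑ j ∈ Finset.range n, if c ≤ |x j| then |x j| else 0) / (n : ℝ))
    Filter.atTop (nhds 0)

/-- Wijsman uniform integrability. -/
def WijsmanUnifIntegrable {X : Type*} [MetricSpace X] (A : ℕ → Set X) : Prop :=
  ∀ x : X, UnifIntegrable (fun j => infDist x (A j))

/-- A lacunary sequence: strictly increasing, starting at `0`,
with gaps `h_r = k_{r+1} - k_r → ∞`. -/
def IsLacunary (k : ℕ → ℕ) : Prop :=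
  k 0 = 0 ∧ StrictMono k ∧
    Filter.Tendsto (fun r : ℕ => k (r + 1) - k r) Filter.atTop Filter.atTop

/-- The gaps `h_r` of a lacunary sequence. -/
def lacH (k : ℕ → ℕ) (r : ℕ) : ℕ := k (r + 1) - k r

/-- The blocks `I_r = (k_r, k_{r+1}]` of a lacunary sequence. -/
def lacI (k : ℕ → ℕ) (r : ℕ) : Finset ℕ := Finset.Ioc (k r) (k (r + 1))

/-- `φ_θ(ε) = limsup_t f(h_t ε)/f(h_t)`. -/
noncomputable def modPhiTheta (f : ℝ → ℝ) (k : ℕ → ℕ) (ε : ℝ) : ℝ :=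
  Filter.limsup (fun t : ℕ => f ((lacH k t : ℝ) * ε) / f ((lacH k t : ℝ))) Filter.atTop

/-- `f` is `θ`-compatible if `φ_θ(ε) → 0` as `ε → 0⁺`. -/
def ThetaCompatible (f : ℝ → ℝ) (k : ℕ → ℕ) : Prop :=
  Filter.Tendsto (modPhiTheta f k) (nhdsWithin 0 (Set.Ioi 0)) (nhds 0)

/-- Wijsman `θ`-lacunary statistical convergence. -/
def WijsmanLacStatConv {X : Type*} [MetricSpace X] (k : ℕ → ℕ) (A : ℕ → Set X)
    (B : Set X) : Prop :=
  ∀ x : X, ∀ ε > (0:ℝ),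
    Filter.Tendsto (fun r : ℕ =>
      (((lacI k r).filter
        (fun j => ε < |infDist x (A j) - infDist x B|)).card : ℝ) / (lacH k r : ℝ))
      Filter.atTop (nhds 0)

/-- Wijsman `θ`-lacunary `f`-statistical convergence. -/
def WijsmanLacFStatConv {X : Type*} [MetricSpace X] (f : ℝ → ℝ) (k : ℕ → ℕ)
    (A : ℕ → Set X) (B : Set X) : Prop :=
  ∀ x : X, ∀ ε > (0:ℝ),
    Filter.Tendsto (fun r : ℕ =>
      f ((((lacI k r).filter
        (fun j => ε < |infDist x (A j) - infDist x B|)).card : ℝ)) / f ((lacH k r : ℝ)))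
      Filter.atTop (nhds 0)

/-- Wijsman `θ`-lacunary `f`-strong Cesàro convergence. -/
def WijsmanLacFStrongCesaro {X : Type*} [MetricSpace X] (f : ℝ → ℝ) (k : ℕ → ℕ)
    (A : ℕ → Set X) (B : Set X) : Prop :=
  ∀ x : X,
    Filter.Tendsto (fun r : ℕ =>
      f (∑ j ∈ lacI k r, |infDist x (A j) - infDist x B|) / f ((lacH k r : ℝ)))
      Filter.atTop (nhds 0)

/-- Wijsman `θ`-lacunary strong Cesàro convergence (the case `f = id`). -/
def WijsmanLacStrongCesaro {X : Type*} [MetricSpace X] (k : ℕ → ℕ)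
    (A : ℕ → Set X) (B : Set X) : Prop :=
  ∀ x : X,
    Filter.Tendsto (fun r : ℕ =>
      (∑ j ∈ lacI k r, |infDist x (A j) - infDist x B|) / (lacH k r : ℝ))
      Filter.atTop (nhds 0)

/-- A real sequence is `θ`-lacunary uniformly integrable. -/
def LacUnifIntegrable (k : ℕ → ℕ) (x : ℕ → ℝ) : Prop :=
  Filter.Tendsto (fun M : ℝ =>
    ⨆ t : ℕ, (∑ j ∈ lacI k t, if M ≤ |x j| then |x j| else 0) / (lacH k t : ℝ))
    Filter.atTop (nhds 0)

/-- Wijsman `θ`-lacunary uniform integrability. -/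
def WijsmanLacUnifIntegrable {X : Type*} [MetricSpace X] (k : ℕ → ℕ)
    (A : ℕ → Set X) : Prop :=
  ∀ x : X, LacUnifIntegrable k (fun j => infDist x (A j))


private lemma modulus_nsmul {f : ℝ → ℝ} (hf : IsModulus f) :
    ∀ (k : ℕ) (x : ℝ), 0 ≤ x → f ((k : ℝ) * x) ≤ (k : ℝ) * f x := by
  obtain ⟨h0, hiff, hsub, hmono, hcont, hub⟩ := hf
  intro k
  induction k with
  | zero => intro x hx; simp [(hiff 0 (Set.mem_Ici.mpr le_rfl)).mpr rfl]
  | succ k ih =>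
    intro x hx
    have hkx : (0:ℝ) ≤ (k:ℝ) * x := mul_nonneg (Nat.cast_nonneg _) hx
    calc f (((k+1:ℕ):ℝ) * x) = f ((k:ℝ)*x + x) := by push_cast; ring_nf
      _ ≤ f ((k:ℝ)*x) + f x := hsub _ hkx _ hx
      _ ≤ (k:ℝ)*f x + f x := by linarith [ih x hx]
      _ = ((k+1:ℕ):ℝ) * f x := by push_cast; ring

private lemma key_cesaro {f : ℝ → ℝ} (hf : IsModulus f) (hfc : Compatible f)
    {a : ℕ → ℝ} (ha : ∀ j, 0 ≤ a j) :
    Filter.Tendsto (fun n : ℕ => f (∑ j ∈ Finset.range n, a j) / f (n : ℝ))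
      Filter.atTop (nhds 0)
    ↔ Filter.Tendsto (fun n : ℕ => (∑ j ∈ Finset.range n, a j) / (n : ℝ))
      Filter.atTop (nhds 0) := by
  obtain ⟨hnn, hiff, hsub, hmono, hcont, hub⟩ := hf
  have f0 : f 0 = 0 := (hiff 0 (Set.mem_Ici.mpr le_rfl)).mpr rfl
  have fpos : ∀ x : ℝ, 0 < x → 0 < f x := by
    intro x hx
    rcases lt_or_eq_of_le (hnn x hx.le) with h | h
    · exact h
    · exact absurd ((hiff x hx.le).mp h.symm) hx.ne'
  set s : ℕ → ℝ := fun n => ∑ j ∈ Finset.range n, a j with hs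
  have hs0 : ∀ n, 0 ≤ s n := fun n => Finset.sum_nonneg fun j _ => ha j
  constructor
  · -- f-strong Cesàro → strong Cesàro
    intro h
    rw [Metric.tendsto_atTop]
    intro c hc
    set m : ℕ := ⌈1/c⌉₊ with hm
    have hm0 : (0:ℝ) < m := by
      have : 0 < m := Nat.ceil_pos.mpr (by positivity)
      exact_mod_cast this
    have hmc : 1 ≤ (m:ℝ) * c := by
      have h1 := Nat.le_ceil (1/c)
      rw [div_le_iff₀ hc] at h1
      simpa [hm] using h1
    obtain ⟨N, hN⟩ := Metric.tendsto_atTop.mp h (1/m) (by positivity)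
    refine ⟨max N 1, fun n hn => ?_⟩
    have hn1 : 1 ≤ n := le_trans (le_max_right _ _) hn
    have hnpos : (0:ℝ) < n := by exact_mod_cast hn1
    have hfn : 0 < f n := fpos _ hnpos
    have hsmall := hN n (le_trans (le_max_left _ _) hn)
    rw [Real.dist_eq, sub_zero, abs_of_nonneg (div_nonneg (hnn _ (hs0 n)) hfn.le)] at hsmall
    rw [Real.dist_eq, sub_zero, abs_of_nonneg (div_nonneg (hs0 n) hnpos.le)]
    by_contra hcon
    push_neg at hcon
    have hsn : c * n ≤ s n := by
      rw [le_div_iff₀ hnpos] at hcon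
      exact hcon
    have hcn0 : (0:ℝ) ≤ c * n := mul_nonneg hc.le hnpos.le
    have h1 : f n ≤ f ((m:ℝ) * (c * n)) := by
      apply hmono hnpos.le (mul_nonneg hm0.le hcn0)
      calc (n:ℝ) = 1 * n := (one_mul _).symm
        _ ≤ ((m:ℝ) * c) * n := by
            apply mul_le_mul_of_nonneg_right hmc hnpos.le
        _ = (m:ℝ) * (c * n) := by ring
    have h2 : f ((m:ℝ) * (c * n)) ≤ (m:ℝ) * f (c * n) :=
      modulus_nsmul ⟨hnn, hiff, hsub, hmono, hcont, hub⟩ m _ hcn0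
    have h3 : f (c * n) ≤ f (s n) := hmono hcn0 (hs0 n) hsn
    have h4 : f n ≤ (m:ℝ) * f (s n) := by nlinarith
    have h5 : 1 / (m:ℝ) ≤ f (s n) / f n := by
      rw [div_le_div_iff₀ hm0 hfn]
      linarith
    linarith
  · -- strong Cesàro → f-strong Cesàro
    intro h
    rw [Metric.tendsto_atTop]
    intro δ hδ
    have hev := Metric.tendsto_nhds.mp hfc (δ/2) (by linarith)
    rw [eventually_nhdsWithin_iff] at hev
    rw [Metric.eventually_nhds_iff] at hev
    obtain ⟨r, hr, hball⟩ := hev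
    set ε : ℝ := min (r/2) 1 with hε
    have hεpos : 0 < ε := lt_min (by linarith) one_pos
    have hε1 : ε ≤ 1 := min_le_right _ _
    have hphi : modPhi f ε < δ/2 := by
      have hd : dist ε (0:ℝ) < r := by
        rw [Real.dist_eq, sub_zero, abs_of_pos hεpos]
        calc ε ≤ r/2 := min_le_left _ _
          _ < r := by linarith
      have := hball hd (Set.mem_Ioi.mpr hεpos)
      rw [Real.dist_eq, sub_zero] at this
      exact lt_of_le_of_lt (le_abs_self _) this
    have hbd : Filter.IsBoundedUnder (· ≤ ·) Filter.atTop
        (fun n : ℕ => f ((n:ℝ) * ε) / f (n:ℝ)) := by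
      refine ⟨1, Filter.eventually_map.mpr (Filter.Eventually.of_forall fun n => ?_)⟩
      rcases Nat.eq_zero_or_pos n with h0 | h0
      · simp [h0, f0]
      · have hnpos : (0:ℝ) < n := by exact_mod_cast h0
        have hle : f ((n:ℝ) * ε) ≤ f n := by
          apply hmono (mul_nonneg hnpos.le hεpos.le) hnpos.le
          calc (n:ℝ) * ε ≤ n * 1 := mul_le_mul_of_nonneg_left hε1 hnpos.le
            _ = n := mul_one _
        exact div_le_one_of_le₀ hle (fpos _ hnpos).le
    have hev2 : ∀ᶠ n : ℕ in Filter.atTop, f ((n:ℝ) * ε) / f (n:ℝ) < δ/2 :=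
      Filter.eventually_lt_of_limsup_lt hphi hbd
    obtain ⟨N1, hN1⟩ := Filter.eventually_atTop.mp hev2
    obtain ⟨N2, hN2⟩ := Metric.tendsto_atTop.mp h ε hεpos
    refine ⟨max (max N1 N2) 1, fun n hn => ?_⟩
    have hn1 : 1 ≤ n := le_trans (le_max_right _ _) hn
    have hnpos : (0:ℝ) < n := by exact_mod_cast hn1
    have hfn : 0 < f n := fpos _ hnpos
    have hsn : s n ≤ (n:ℝ) * ε := by
      have := hN2 n (le_trans (le_trans (le_max_right _ _) (le_max_left _ _)) hn)
      rw [Real.dist_eq, sub_zero, abs_of_nonneg (div_nonneg (hs0 n) hnpos.le)] at this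
      rw [mul_comm]
      exact le_of_lt ((div_lt_iff₀ hnpos).mp this)
    have hfs : f (s n) ≤ f ((n:ℝ) * ε) :=
      hmono (hs0 n) (mul_nonneg hnpos.le hεpos.le) hsn
    have hlt := hN1 n (le_trans (le_trans (le_max_left _ _) (le_max_left _ _)) hn)
    rw [Real.dist_eq, sub_zero, abs_of_nonneg (div_nonneg (hnn _ (hs0 n)) hfn.le)]
    calc f (s n) / f n ≤ f ((n:ℝ) * ε) / f n := by
          apply div_le_div_of_nonneg_right hfs hfn.le
      _ < δ/2 := hlt
      _ < δ := by linarith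


theorem wijsman_fcesaro_iff_cesaro_of_compatible {X : Type*} [MetricSpace X]
    (f : ℝ → ℝ) (hf : IsModulus f) (hfc : Compatible f)
    (A : ℕ → Set X) (B : Set X)
    (hA : ∀ n, (A n).Nonempty ∧ IsClosed (A n)) (hB : B.Nonempty ∧ IsClosed B) :
    WijsmanFStrongCesaro f A B ↔ WijsmanStrongCesaro A B := by
  constructor
  · intro h x
    exact (key_cesaro hf hfc (fun j => abs_nonneg _)).mp (h x)
  · intro h x
    exact (key_cesaro hf hfc (fun j => abs_nonneg _)).mpr (h x)
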